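/- (Recursion (IW) for the W-sum.) Suppose f : α → α → R is antisymmetric, i.e. f(u,v) = −f(v,u) for all u, v ∈ α, and k ≥ 2. Then W_f((a_1,b_1), (a_2,b_2), …, (a_k,b_k)) = Σ_{l=2}^k [ W_f((a_l,b_1), (a_2,b_2), …, (a_{l−1},b_{l−1}), (a_{l+1},b_{l+1}), …, (a_k,b_k)) · f(b_l, a_1) − W_f((b_l,b_1), (a_2,b_2), …, (a_{l−1},b_{l−1}), (a_{l+1},b_{l+1}), …, (a_k,b_k)) · f(a_l, a_1) ], where the W_f's on the right-hand side are taken over the indicated (k−1)-tuples of pairs. -/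

import Mathlib

/-- The sign of a Boolean: `true ↦ 1`, `false ↦ -1` (encoding `ε ∈ {1, -1}`). -/
def signR (R : Type*) [CommRing R] (e : Bool) : R := if e then 1 else -1

/-- `B_i(ε)`: the second component `b_i` if `ε = 1`, the first component `a_i` if `ε = -1`. -/
def Bc {α : Type*} (q : α × α) (e : Bool) : α := if e then q.2 else q.1

/-- `A_i(ε)`: the first component `a_i` if `ε = 1`, the second component `b_i` if `ε = -1`. -/
def Ac {α : Type*} (q : α × α) (e : Bool) : α := if e then q.1 else q.2

/-- `W_h((a_1,b_1), …, (a_k,b_k)) = Σ_{ε ∈ {1,−1}^k} Σ_{σ ∈ S'_k} ∏_{i=1}^k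
ε_{σ(i)} · h(B_{σ(i)}(ε_{σ(i)}), A_{σ(i+1)}(ε_{σ(i+1)}))`, where `S'_k` is the set
of permutations fixing the first index, and indices are cyclic (`σ(k+1) := σ(1)`). -/
def Wsum {R α : Type*} [CommRing R] (h : α → α → R) {k : ℕ} (p : Fin k → α × α) : R :=
  ∑ ε : Fin k → Bool,
    ∑ σ ∈ Finset.univ.filter (fun σ : Equiv.Perm (Fin k) => ∀ i : Fin k, (i : ℕ) = 0 → σ i = i),
      ∏ i : Fin k,
        signR R (ε (σ i)) * h (Bc (p (σ i)) (ε (σ i)))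
          (Ac (p (σ (finRotate k i))) (ε (σ (finRotate k i))))

namespace WAux

open Finset Equiv

variable {R α : Type*} [CommRing R]

lemma Bc_not (q : α × α) (e : Bool) : Bc q (!e) = Ac q e := by cases e <;> rfl
lemma Ac_not (q : α × α) (e : Bool) : Ac q (!e) = Bc q e := by cases e <;> rfl
lemma signR_not (e : Bool) : signR R (!e) = -signR R e := by cases e <;> simp [signR]

def term (f : α → α → R) {k : ℕ} (p : Fin k → α × α) (ε : Fin k → Bool)
    (σ : Equiv.Perm (Fin k)) : R :=
  ∏ i : Fin k,
    signR R (ε (σ i)) * f (Bc (p (σ i)) (ε (σ i)))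
      (Ac (p (σ (finRotate k i))) (ε (σ (finRotate k i))))

def Half (f : α → α → R) {m : ℕ} (p : Fin (m + 1) → α × α) : R :=
  ∑ ε ∈ Finset.univ.filter (fun ε : Fin (m + 1) → Bool => ε 0 = true),
    ∑ σ ∈ Finset.univ.filter (fun σ : Equiv.Perm (Fin (m + 1)) => σ 0 = 0),
      term f p ε σ

lemma Wsum_eq_sum_term (f : α → α → R) {m : ℕ} (p : Fin (m + 1) → α × α) :
    Wsum f p = ∑ ε : Fin (m + 1) → Bool,
      ∑ σ ∈ Finset.univ.filter (fun σ : Equiv.Perm (Fin (m + 1)) => σ 0 = 0),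
        term f p ε σ := by
  unfold Wsum term
  congr 1
  funext ε
  congr 1
  apply Finset.filter_congr
  intro σ _
  constructor
  · intro h; exact h 0 rfl
  · intro h i hi
    have : i = 0 := Fin.ext hi
    subst this; exact h

lemma term_flip (f : α → α → R) (hanti : ∀ u v : α, f u v = - f v u) {m : ℕ}
    (p : Fin (m + 1) → α × α) (ε : Fin (m + 1) → Bool) (σ : Equiv.Perm (Fin (m + 1))) :
    term f p (fun i => !(ε i)) (σ * Equiv.neg (Fin (m + 1))) = term f p ε σ := by
  unfold term
  set V : Fin (m + 1) → R := fun j =>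
    f (Bc (p (σ j)) (ε (σ j))) (Ac (p (σ (finRotate (m + 1) j))) (ε (σ (finRotate (m + 1) j))))
    with hV
  set e₀ : Fin (m + 1) ≃ Fin (m + 1) := (finRotate (m + 1)).trans (Equiv.neg (Fin (m + 1))) with he₀
  have key : ∀ j : Fin (m + 1),
      signR R (!(ε ((σ * Equiv.neg (Fin (m+1))) (e₀ j)))) *
        f (Bc (p ((σ * Equiv.neg (Fin (m+1))) (e₀ j))) (!(ε ((σ * Equiv.neg (Fin (m+1))) (e₀ j)))))
          (Ac (p ((σ * Equiv.neg (Fin (m+1))) (finRotate (m+1) (e₀ j))))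
            (!(ε ((σ * Equiv.neg (Fin (m+1))) (finRotate (m+1) (e₀ j))))))
      = signR R (ε (σ (finRotate (m + 1) j))) * V j := by
    intro j
    have h1 : (σ * Equiv.neg (Fin (m+1))) (e₀ j) = σ (j + 1) := by
      simp only [Equiv.Perm.mul_apply, Equiv.neg_apply, he₀, Equiv.trans_apply,
        finRotate_succ_apply, neg_neg]
    have h2 : (σ * Equiv.neg (Fin (m+1))) (finRotate (m+1) (e₀ j)) = σ j := by
      have harg : -(-(j + 1) + 1) = j := by open Fin.CommRing in ring
      simp only [Equiv.Perm.mul_apply, Equiv.neg_apply, he₀, Equiv.trans_apply,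
        finRotate_succ_apply]
      rw [harg]
    rw [h1, h2, hV, Bc_not, Ac_not, signR_not]
    simp only [finRotate_succ_apply]
    rw [hanti (Ac (p (σ (j+1))) (ε (σ (j+1)))) (Bc (p (σ j)) (ε (σ j)))]
    ring
  calc
    (∏ i : Fin (m+1),
        signR R (!(ε ((σ * Equiv.neg (Fin (m+1))) i))) *
          f (Bc (p ((σ * Equiv.neg (Fin (m+1))) i)) (!(ε ((σ * Equiv.neg (Fin (m+1))) i))))
            (Ac (p ((σ * Equiv.neg (Fin (m+1))) (finRotate (m+1) i)))
              (!(ε ((σ * Equiv.neg (Fin (m+1))) (finRotate (m+1) i))))))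
      = ∏ j : Fin (m+1),
          signR R (!(ε ((σ * Equiv.neg (Fin (m+1))) (e₀ j)))) *
            f (Bc (p ((σ * Equiv.neg (Fin (m+1))) (e₀ j))) (!(ε ((σ * Equiv.neg (Fin (m+1))) (e₀ j)))))
              (Ac (p ((σ * Equiv.neg (Fin (m+1))) (finRotate (m+1) (e₀ j))))
                (!(ε ((σ * Equiv.neg (Fin (m+1))) (finRotate (m+1) (e₀ j)))))) :=
        (Equiv.prod_comp e₀ _).symm
    _ = ∏ j : Fin (m+1), signR R (ε (σ (finRotate (m + 1) j))) * V j :=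
        Finset.prod_congr rfl (fun j _ => key j)
    _ = (∏ j : Fin (m+1), signR R (ε (σ (finRotate (m + 1) j)))) * ∏ j : Fin (m+1), V j :=
        Finset.prod_mul_distrib
    _ = (∏ j : Fin (m+1), signR R (ε (σ j))) * ∏ j : Fin (m+1), V j := by
        rw [Equiv.prod_comp (finRotate (m+1)) (fun j => signR R (ε (σ j)))]
    _ = ∏ j : Fin (m+1), signR R (ε (σ j)) * V j := Finset.prod_mul_distrib.symm

lemma Wsum_eq_two_mul_half (f : α → α → R) (hanti : ∀ u v : α, f u v = - f v u) {m : ℕ}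
    (p : Fin (m + 1) → α × α) : Wsum f p = 2 * Half f p := by
  rw [Wsum_eq_sum_term]
  rw [← Finset.sum_filter_add_sum_filter_not Finset.univ
    (fun ε : Fin (m + 1) → Bool => ε 0 = true)]
  have hflip :
      (∑ ε ∈ Finset.univ.filter (fun ε : Fin (m+1) → Bool => ¬ ε 0 = true),
        ∑ σ ∈ Finset.univ.filter (fun σ : Equiv.Perm (Fin (m+1)) => σ 0 = 0), term f p ε σ)
      = Half f p := by
    rw [Half, ← Finset.sum_product', ← Finset.sum_product']
    refine Finset.sum_nbij'
      (fun x => (fun i => !(x.1 i), x.2 * Equiv.neg (Fin (m+1))))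
      (fun x => (fun i => !(x.1 i), x.2 * Equiv.neg (Fin (m+1)))) ?_ ?_ ?_ ?_ ?_
    · rintro ⟨ε, σ⟩ hx
      simp only [Finset.mem_product, Finset.mem_filter, Finset.mem_univ, true_and] at hx ⊢
      refine ⟨by simp [hx.1], ?_⟩
      simp only [Equiv.Perm.mul_apply, Equiv.neg_apply, neg_zero, hx.2]
    · rintro ⟨ε, σ⟩ hx
      simp only [Finset.mem_product, Finset.mem_filter, Finset.mem_univ, true_and] at hx ⊢
      refine ⟨by simp [hx.1], ?_⟩
      simp only [Equiv.Perm.mul_apply, Equiv.neg_apply, neg_zero, hx.2]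
    · rintro ⟨ε, σ⟩ _
      refine Prod.ext (by funext i; simp) ?_
      simp only
      ext x
      simp [Equiv.Perm.mul_apply]
    · rintro ⟨ε, σ⟩ _
      refine Prod.ext (by funext i; simp) ?_
      simp only
      ext x
      simp [Equiv.Perm.mul_apply]
    · rintro ⟨ε, σ⟩ _
      exact (term_flip f hanti p ε σ).symm
  rw [hflip, Half, two_mul]

end WAux


namespace WAux

open Finset Equiv

variable {R α : Type*} [CommRing R] {n : ℕ}

def unsucc (l i : Fin (n + 2)) : Fin (n + 1) := ((finSuccEquiv' l) i).getD 0

lemma unsucc_succAbove (l : Fin (n + 2)) (j : Fin (n + 1)) : unsucc l (l.succAbove j) = j := by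
  simp [unsucc, finSuccEquiv'_succAbove]

lemma succAbove_unsucc {l i : Fin (n + 2)} (h : i ≠ l) : l.succAbove (unsucc l i) = i := by
  obtain ⟨j, rfl⟩ := Fin.exists_succAbove_eq h
  rw [unsucc_succAbove]

lemma succAbove_zero' {l : Fin (n + 2)} (h : l ≠ 0) : l.succAbove 0 = 0 := by
  rw [Fin.succAbove_of_castSucc_lt]
  · exact Fin.castSucc_zero
  · rw [Fin.castSucc_zero]; exact Fin.pos_of_ne_zero h

lemma unsucc_zero {l : Fin (n + 2)} (h : l ≠ 0) : unsucc l 0 = 0 := by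
  conv_lhs => rw [← succAbove_zero' h]
  rw [unsucc_succAbove]

noncomputable def fwdPerm (σ : Equiv.Perm (Fin (n + 2))) : Equiv.Perm (Fin (n + 1)) :=
  Equiv.ofBijective (fun j => unsucc (σ (Fin.last (n + 1))) (σ j.castSucc))
    (Finite.injective_iff_bijective.1 (by
      intro a b hab
      have ha : σ a.castSucc ≠ σ (Fin.last (n + 1)) :=
        fun h => (Fin.castSucc_lt_last a).ne (σ.injective h)
      have hb : σ b.castSucc ≠ σ (Fin.last (n + 1)) :=
        fun h => (Fin.castSucc_lt_last b).ne (σ.injective h)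
      have h2 := congrArg (Fin.succAbove (σ (Fin.last (n + 1)))) hab
      rw [succAbove_unsucc ha, succAbove_unsucc hb] at h2
      exact Fin.castSucc_injective _ (σ.injective h2)))

lemma fwdPerm_apply (σ : Equiv.Perm (Fin (n + 2))) (j : Fin (n + 1)) :
    fwdPerm σ j = unsucc (σ (Fin.last (n + 1))) (σ j.castSucc) := rfl

noncomputable def bwdPerm (l : Fin (n + 2)) (σ' : Equiv.Perm (Fin (n + 1))) : Equiv.Perm (Fin (n + 2)) :=
  Equiv.ofBijective
    (fun j => Fin.lastCases (motive := fun _ => Fin (n + 2)) l (fun j' => l.succAbove (σ' j')) j)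
    (Finite.injective_iff_bijective.1 (by
      intro a b hab
      rcases Fin.eq_castSucc_or_eq_last a with ⟨a', rfl⟩ | rfl <;>
        rcases Fin.eq_castSucc_or_eq_last b with ⟨b', rfl⟩ | rfl <;>
        simp only [Fin.lastCases_last, Fin.lastCases_castSucc] at hab
      · rw [σ'.injective (Fin.succAbove_right_injective hab)]
      · exact absurd hab (Fin.succAbove_ne l (σ' a'))
      · exact absurd hab.symm (Fin.succAbove_ne l (σ' b'))
      · rfl))

lemma bwdPerm_last (l : Fin (n + 2)) (σ' : Equiv.Perm (Fin (n + 1))) :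
    bwdPerm l σ' (Fin.last (n + 1)) = l := by
  show Fin.lastCases _ _ _ = l
  rw [Fin.lastCases_last]

lemma bwdPerm_castSucc (l : Fin (n + 2)) (σ' : Equiv.Perm (Fin (n + 1))) (j : Fin (n + 1)) :
    bwdPerm l σ' j.castSucc = l.succAbove (σ' j) := by
  exact Fin.lastCases_castSucc (motive := fun _ => Fin (n + 2)) j

def Pnew (p : Fin (n + 2) → α × α) (l : Fin (n + 2)) (e : Bool) : Fin (n + 1) → α × α :=
  Function.update (p ∘ l.succAbove) 0 (Ac (p l) e, (p 0).2)

lemma sigma_last_ne (σ : Equiv.Perm (Fin (n + 2))) (hσ : σ 0 = 0) :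
    σ (Fin.last (n + 1)) ≠ 0 := by
  rw [← hσ]
  intro h
  exact absurd (σ.injective h) (by simp [Fin.ext_iff])

lemma fwdPerm_zero (σ : Equiv.Perm (Fin (n + 2))) (hσ : σ 0 = 0) : fwdPerm σ 0 = 0 := by
  rw [fwdPerm_apply, Fin.castSucc_zero, hσ, unsucc_zero (sigma_last_ne σ hσ)]

lemma term_split (f : α → α → R) (p : Fin (n + 2) → α × α) (ε : Fin (n + 2) → Bool)
    (σ : Equiv.Perm (Fin (n + 2))) (hε : ε 0 = true) (hσ : σ 0 = 0) :
    term f p ε σ =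
      term f (Pnew p (σ (Fin.last (n + 1))) (ε (σ (Fin.last (n + 1)))))
        (fun i => ε ((σ (Fin.last (n + 1))).succAbove i)) (fwdPerm σ) *
      (signR R (ε (σ (Fin.last (n + 1)))) *
        f (Bc (p (σ (Fin.last (n + 1)))) (ε (σ (Fin.last (n + 1))))) ((p 0).1)) := by
  set l := σ (Fin.last (n + 1)) with hl
  set e := ε l with he
  set ε' : Fin (n + 1) → Bool := fun i => ε (l.succAbove i) with hε'
  set σ' := fwdPerm σ with hσ'
  have hl0 : l ≠ 0 := sigma_last_ne σ hσ
  have hne : ∀ j : Fin (n + 1), σ j.castSucc ≠ l :=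
    fun j h => (Fin.castSucc_lt_last j).ne (σ.injective h)
  have hsa : ∀ j, l.succAbove (σ' j) = σ j.castSucc := fun j => succAbove_unsucc (hne j)
  have hσ'0 : σ' 0 = 0 := fwdPerm_zero σ hσ
  have hj0 : ∀ j : Fin (n + 1), σ' j = 0 → j = 0 := fun j h => σ'.injective (h.trans hσ'0.symm)
  have hε'0 : ε' 0 = true := by
    rw [hε']; show ε (l.succAbove 0) = true; rw [succAbove_zero' hl0, hε]
  have hgen : ∀ j : Fin (n + 1), j ≠ 0 →
      Pnew p l e (σ' j) = p (σ j.castSucc) ∧ ε' (σ' j) = ε (σ j.castSucc) := by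
    intro j hj
    have h0 : σ' j ≠ 0 := fun h => hj (hj0 j h)
    constructor
    · rw [Pnew, Function.update_of_ne h0]
      show p (l.succAbove (σ' j)) = _
      rw [hsa]
    · rw [hε']; show ε (l.succAbove (σ' j)) = _; rw [hsa]
  have hPz : Pnew p l e 0 = (Ac (p l) e, (p 0).2) := by
    rw [Pnew, Function.update_self]
  have hεz : ε' (σ' 0) = ε (σ (Fin.castSucc 0)) := by
    rw [hσ'0, hε'0, Fin.castSucc_zero, hσ, hε]
  have hBz : Bc (Pnew p l e (σ' 0)) (ε' (σ' 0)) = Bc (p (σ (Fin.castSucc 0))) (ε (σ (Fin.castSucc 0))) := by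
    rw [hσ'0, hε'0, Fin.castSucc_zero, hσ, hε, hPz]
    rfl
  have hPε : ∀ j : Fin (n + 1),
      ε' (σ' j) = ε (σ j.castSucc) ∧
      Bc (Pnew p l e (σ' j)) (ε' (σ' j)) = Bc (p (σ j.castSucc)) (ε (σ j.castSucc)) := by
    intro j
    by_cases hj : j = 0
    · subst hj; exact ⟨hεz, hBz⟩
    · obtain ⟨h1, h2⟩ := hgen j hj
      exact ⟨h2, by rw [h1, h2]⟩
  have hAc : ∀ j : Fin (n + 1),
      Ac (Pnew p l e (σ' (finRotate (n + 1) j))) (ε' (σ' (finRotate (n + 1) j))) =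
      Ac (p (σ (finRotate (n + 2) j.castSucc))) (ε (σ (finRotate (n + 2) j.castSucc))) := by
    intro j
    by_cases hjl : j = Fin.last n
    · subst hjl
      rw [finRotate_last]
      have h2 : finRotate (n + 2) ((Fin.last n).castSucc) = Fin.last (n + 1) := by
        rw [finRotate_succ_apply]
        apply Fin.ext
        rw [Fin.val_add_one_of_lt (Fin.castSucc_lt_last _)]
        simp [Fin.last]
      rw [h2, hσ'0, hε'0, hPz, ← hl, ← he]
      rfl
    · have hlt : j < Fin.last n := Fin.lt_last_iff_ne_last.2 hjl
      have hr1 : finRotate (n + 2) j.castSucc = (finRotate (n + 1) j).castSucc := by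
        rw [finRotate_succ_apply, finRotate_succ_apply]
        apply Fin.ext
        rw [Fin.val_add_one_of_lt (lt_of_lt_of_le (Fin.castSucc_lt_castSucc_iff.2 hlt) (Fin.castSucc_lt_last _).le)]
        rw [Fin.coe_castSucc, Fin.coe_castSucc, Fin.val_add_one_of_lt hlt]
      have hr2 : finRotate (n + 1) j ≠ 0 := by
        rw [finRotate_succ_apply]
        intro h
        have := congrArg Fin.val h
        rw [Fin.val_add_one_of_lt hlt] at this
        simp at this
      obtain ⟨h1, h2⟩ := hgen _ hr2
      rw [h1, h2, hr1]
  unfold term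
  rw [Fin.prod_univ_castSucc (fun i : Fin (n + 2) =>
    signR R (ε (σ i)) * f (Bc (p (σ i)) (ε (σ i)))
      (Ac (p (σ (finRotate (n + 2) i))) (ε (σ (finRotate (n + 2) i)))))]
  congr 1
  · apply Finset.prod_congr rfl
    intro j _
    rw [(hPε j).2, (hPε j).1, hAc j]
  · rw [finRotate_last, hσ, hε, ← hl, ← he]
    rfl

end WAux


namespace WAux

open Finset Equiv

variable {R α : Type*} [CommRing R] {n : ℕ}

lemma half_rec (f : α → α → R) (p : Fin (n + 2) → α × α) :
    Half f p =
      ∑ l ∈ Finset.univ.filter (fun l : Fin (n + 2) => l ≠ 0), ∑ e : Bool,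
        Half f (Pnew p l e) * (signR R e * f (Bc (p l) e) ((p 0).1)) := by
  have lhs_eq : Half f p =
      ∑ x ∈ (Finset.univ.filter (fun ε : Fin (n + 2) → Bool => ε 0 = true)) ×ˢ
        (Finset.univ.filter (fun σ : Equiv.Perm (Fin (n + 2)) => σ 0 = 0)),
          term f p x.1 x.2 := by
    rw [Half]; exact (Finset.sum_product' _ _ _).symm
  have rhs_eq :
      (∑ y ∈ ((Finset.univ.filter (fun l : Fin (n + 2) => l ≠ 0)) ×ˢ (Finset.univ : Finset Bool)) ×ˢ
          ((Finset.univ.filter (fun ε' : Fin (n + 1) → Bool => ε' 0 = true)) ×ˢ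
            (Finset.univ.filter (fun σ' : Equiv.Perm (Fin (n + 1)) => σ' 0 = 0))),
        term f (Pnew p y.1.1 y.1.2) y.2.1 y.2.2 *
          (signR R y.1.2 * f (Bc (p y.1.1) y.1.2) ((p 0).1)))
      = ∑ l ∈ Finset.univ.filter (fun l : Fin (n + 2) => l ≠ 0), ∑ e : Bool,
          Half f (Pnew p l e) * (signR R e * f (Bc (p l) e) ((p 0).1)) := by
    simp only [Finset.sum_product]
    apply Finset.sum_congr rfl
    intro l _
    apply Finset.sum_congr rfl
    intro e _
    rw [Half, Finset.sum_mul]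
    apply Finset.sum_congr rfl
    intro ε'' _
    rw [Finset.sum_mul]
  rw [lhs_eq, ← rhs_eq]
  refine Finset.sum_nbij'
    (fun x => ((x.2 (Fin.last (n + 1)), x.1 (x.2 (Fin.last (n + 1)))),
      (fun i => x.1 ((x.2 (Fin.last (n + 1))).succAbove i), fwdPerm x.2)))
    (fun y => ((fun i => if i = y.1.1 then y.1.2 else y.2.1 (unsucc y.1.1 i)),
      bwdPerm y.1.1 y.2.2)) ?_ ?_ ?_ ?_ ?_
  · rintro ⟨ε, σ⟩ hx
    simp only [Finset.mem_product, Finset.mem_filter, Finset.mem_univ, true_and] at hx ⊢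
    obtain ⟨hε, hσ⟩ := hx
    refine ⟨⟨sigma_last_ne σ hσ, trivial⟩, ?_, fwdPerm_zero σ hσ⟩
    show ε ((σ (Fin.last (n + 1))).succAbove 0) = true
    rw [succAbove_zero' (sigma_last_ne σ hσ), hε]
  · rintro ⟨⟨l, e⟩, ε', σ'⟩ hy
    simp only [Finset.mem_product, Finset.mem_filter, Finset.mem_univ, true_and] at hy ⊢
    obtain ⟨⟨hl, -⟩, hε', hσ'⟩ := hy
    constructor
    · show (if (0 : Fin (n + 2)) = l then e else ε' (unsucc l 0)) = true
      rw [if_neg (Ne.symm hl), unsucc_zero hl, hε']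
    · have h0 : bwdPerm l σ' (Fin.castSucc 0) = 0 := by
        rw [bwdPerm_castSucc, hσ', succAbove_zero' hl]
      rw [Fin.castSucc_zero] at h0
      exact h0
  · rintro ⟨ε, σ⟩ hx
    simp only [Finset.mem_product, Finset.mem_filter, Finset.mem_univ, true_and] at hx
    obtain ⟨hε, hσ⟩ := hx
    have hne : ∀ j : Fin (n + 1), σ j.castSucc ≠ σ (Fin.last (n + 1)) :=
      fun j h => (Fin.castSucc_lt_last j).ne (σ.injective h)
    refine Prod.ext ?_ ?_
    · funext i
      simp only
      by_cases hi : i = σ (Fin.last (n + 1))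
      · rw [if_pos hi, hi]
      · rw [if_neg hi, succAbove_unsucc hi]
    · simp only
      apply Equiv.ext
      intro x
      rcases Fin.eq_castSucc_or_eq_last x with ⟨j, rfl⟩ | rfl
      · rw [bwdPerm_castSucc, fwdPerm_apply, succAbove_unsucc (hne j)]
      · rw [bwdPerm_last]
  · rintro ⟨⟨l, e⟩, ε', σ'⟩ hy
    simp only [Finset.mem_product, Finset.mem_filter, Finset.mem_univ, true_and] at hy
    obtain ⟨⟨hl, -⟩, hε', hσ'⟩ := hy
    have hbl : bwdPerm l σ' (Fin.last (n + 1)) = l := bwdPerm_last l σ'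
    refine Prod.ext (Prod.ext ?_ ?_) (Prod.ext ?_ ?_)
    · exact hbl
    · show (if bwdPerm l σ' (Fin.last (n + 1)) = l then e
        else ε' (unsucc l (bwdPerm l σ' (Fin.last (n + 1))))) = e
      rw [if_pos hbl]
    · funext i
      show (if (bwdPerm l σ' (Fin.last (n + 1))).succAbove i = l then e
        else ε' (unsucc l ((bwdPerm l σ' (Fin.last (n + 1))).succAbove i))) = ε' i
      rw [hbl, if_neg (Fin.succAbove_ne l i), unsucc_succAbove]
    · apply Equiv.ext
      intro j
      show unsucc (bwdPerm l σ' (Fin.last (n + 1))) (bwdPerm l σ' j.castSucc) = σ' j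
      rw [hbl, bwdPerm_castSucc, unsucc_succAbove]
  · rintro ⟨ε, σ⟩ hx
    simp only [Finset.mem_product, Finset.mem_filter, Finset.mem_univ, true_and] at hx
    exact term_split f p ε σ hx.1 hx.2

end WAux


/-- Recursion (IW) for the `W`-sum: if `f` is antisymmetric and `k ≥ 2`
(here `k = n + 2`), then
`W_f((a_1,b_1),…,(a_k,b_k)) = Σ_{l=2}^k [ W_f((a_l,b_1), P_l) · f(b_l,a_1)
  − W_f((b_l,b_1), P_l) · f(a_l,a_1) ]`,
where `P_l` is the tuple `(a_2,b_2), …, (a_k,b_k)` with the `l`-th pair removed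
(realized via `Fin.succAbove l` and updating the first entry). -/
theorem Wsum_recursion {R α : Type*} [CommRing R] {n : ℕ}
    (p : Fin (n + 2) → α × α) (f : α → α → R)
    (hanti : ∀ u v : α, f u v = - f v u) :
    Wsum f p =
      ∑ l ∈ Finset.univ.filter (fun l : Fin (n + 2) => l ≠ 0),
        (Wsum f (Function.update (p ∘ l.succAbove) 0 ((p l).1, (p 0).2)) * f (p l).2 (p 0).1
          - Wsum f (Function.update (p ∘ l.succAbove) 0 ((p l).2, (p 0).2)) * f (p l).1 (p 0).1)
    := by
  rw [WAux.Wsum_eq_two_mul_half f hanti p, WAux.half_rec, Finset.mul_sum]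
  apply Finset.sum_congr rfl
  intro l _
  rw [Fintype.sum_bool]
  have h1 : Wsum f (Function.update (p ∘ l.succAbove) 0 ((p l).1, (p 0).2)) =
      2 * WAux.Half f (WAux.Pnew p l true) :=
    WAux.Wsum_eq_two_mul_half f hanti _
  have h2 : Wsum f (Function.update (p ∘ l.succAbove) 0 ((p l).2, (p 0).2)) =
      2 * WAux.Half f (WAux.Pnew p l false) :=
    WAux.Wsum_eq_two_mul_half f hanti _
  rw [h1, h2]
  simp only [signR, Bc, if_true, if_false, Bool.false_eq_true]
  ring
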